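/- Let X be a reflexive Banach space, Y a Banach space, 1 ≤ p < ∞, and T, S compact tuple operators X → ℓ_p^d(Y) with components T_i, S_i. Suppose ∩_{j=1}^d M_{T_j − z_j⁰S_j} ≠ ∅ where z⁰ ∈ 𝔽^d satisfies dist(T, 𝔽^d S) = ‖T − z⁰S‖. Then dist(T_j, 𝔽S_j) = ‖T_j − z_j⁰S_j‖ for all 1 ≤ j ≤ d, and dist(T, 𝔽^d S)^p = Σ_{j=1}^d dist(T_j, 𝔽S_j)^p. -/
import Mathlib

open scoped ENNReal

/-- The tuple operator `x ↦ (T₁x, …, T_d x)` into the `ℓ_p` direct sum. -/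
noncomputable def tupleOpP {𝕜 : Type*} [RCLike 𝕜] {X Y : Type*} [NormedAddCommGroup X]
    [NormedSpace 𝕜 X] [NormedAddCommGroup Y] [NormedSpace 𝕜 Y] {d : ℕ} (p : ℝ≥0∞)
    [Fact (1 ≤ p)] (Tc : Fin d → (X →L[𝕜] Y)) : X →L[𝕜] PiLp p (fun _ : Fin d => Y) :=
  ((PiLp.continuousLinearEquiv p 𝕜 (fun _ : Fin d => Y)).symm :
      (∀ _ : Fin d, Y) →L[𝕜] PiLp p (fun _ : Fin d => Y)).comp (ContinuousLinearMap.pi Tc)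

section aux
variable {𝕜 : Type*} [RCLike 𝕜] {X Y : Type*} [NormedAddCommGroup X]
    [NormedSpace 𝕜 X] [NormedAddCommGroup Y] [NormedSpace 𝕜 Y] {d : ℕ} (p : ℝ≥0∞)
    [Fact (1 ≤ p)]

lemma tupleOpP_apply (A : Fin d → (X →L[𝕜] Y)) (x : X) (j : Fin d) :
    tupleOpP p A x j = A j x := rfl

lemma tupleOpP_sub (A B : Fin d → (X →L[𝕜] Y)) :
    tupleOpP p A - tupleOpP p B = tupleOpP p (fun i => A i - B i) := by
  ext x j; rfl

lemma norm_tupleOpP_apply (hp : p ≠ ∞) (A : Fin d → (X →L[𝕜] Y)) (x : X) :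
    ‖tupleOpP p A x‖ = (∑ j, ‖A j x‖ ^ p.toReal) ^ (1 / p.toReal) :=
  PiLp.norm_eq_sum (p.toReal_pos_iff_ne_top.mpr hp) _

lemma norm_tupleOpP_le (hp : p ≠ ∞) (A : Fin d → (X →L[𝕜] Y)) :
    ‖tupleOpP p A‖ ≤ (∑ j, ‖A j‖ ^ p.toReal) ^ (1 / p.toReal) := by
  have hq : 0 < p.toReal := p.toReal_pos_iff_ne_top.mpr hp
  refine ContinuousLinearMap.opNorm_le_bound _ (Real.rpow_nonneg (Finset.sum_nonneg
    fun j _ => Real.rpow_nonneg (norm_nonneg _) _) _) fun x => ?_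
  rw [norm_tupleOpP_apply p hp]
  calc (∑ j, ‖A j x‖ ^ p.toReal) ^ (1 / p.toReal)
      ≤ (∑ j, (‖A j‖ * ‖x‖) ^ p.toReal) ^ (1 / p.toReal) := by
        refine Real.rpow_le_rpow (Finset.sum_nonneg fun j _ =>
          Real.rpow_nonneg (norm_nonneg _) _) (Finset.sum_le_sum fun j _ =>
          Real.rpow_le_rpow (norm_nonneg _) (ContinuousLinearMap.le_opNorm _ _) hq.le)
          (by positivity)
    _ = (∑ j, ‖A j‖ ^ p.toReal) ^ (1 / p.toReal) * ‖x‖ := by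
        simp_rw [Real.mul_rpow (norm_nonneg _) (norm_nonneg _), ← Finset.sum_mul,
          Real.mul_rpow (Finset.sum_nonneg fun j _ => Real.rpow_nonneg (norm_nonneg _) _)
            (Real.rpow_nonneg (norm_nonneg _) _), one_div,
          Real.rpow_rpow_inv (norm_nonneg x) hq.ne']

end aux

/-- `X` reflexive Banach, `Y` Banach, `1 ≤ p < ∞`, compact tuples `T, S`.
If `z⁰` realizes `dist(T, 𝔽^d S)` and the norm attainment sets `M_{T_j − z_j⁰S_j}` have a
common point, then `dist(T_j, 𝔽S_j) = ‖T_j − z_j⁰S_j‖` for all `j`, and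
`dist(T, 𝔽^d S)^p = Σ_j dist(T_j, 𝔽S_j)^p`. -/
theorem stmt13 {𝕜 : Type*} [RCLike 𝕜] {X Y : Type*} [NormedAddCommGroup X] [NormedSpace 𝕜 X]
    [CompleteSpace X] [NormedAddCommGroup Y] [NormedSpace 𝕜 Y] [CompleteSpace Y]
    (hrefl : Function.Surjective (NormedSpace.inclusionInDoubleDual 𝕜 X))
    {d : ℕ} (p : ℝ≥0∞) [Fact (1 ≤ p)] (hp : p ≠ ∞)
    (Tc Sc : Fin d → (X →L[𝕜] Y))
    (hTcpt : ∀ i, IsCompactOperator (Tc i)) (hScpt : ∀ i, IsCompactOperator (Sc i))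
    (z0 : Fin d → 𝕜)
    (hdist : Metric.infDist (tupleOpP p Tc)
        (Set.range fun z : Fin d → 𝕜 => tupleOpP p (fun i => z i • Sc i)) =
      ‖tupleOpP p (fun j => Tc j - z0 j • Sc j)‖)
    (hM : ∃ x : X, ‖x‖ = 1 ∧ ∀ j, ‖(Tc j - z0 j • Sc j) x‖ = ‖Tc j - z0 j • Sc j‖) :
    (∀ j, Metric.infDist (Tc j) (Set.range fun lam : 𝕜 => lam • Sc j) =
        ‖Tc j - z0 j • Sc j‖) ∧
      (Metric.infDist (tupleOpP p Tc)
          (Set.range fun z : Fin d → 𝕜 => tupleOpP p (fun i => z i • Sc i))) ^ p.toReal =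
        ∑ j, (Metric.infDist (Tc j) (Set.range fun lam : 𝕜 => lam • Sc j)) ^ p.toReal := by
  obtain ⟨x, hx1, hxM⟩ := hM
  have hq : 0 < p.toReal := p.toReal_pos_iff_ne_top.mpr hp
  set q := p.toReal with hqdef
  set A : Fin d → (X →L[𝕜] Y) := fun j => Tc j - z0 j • Sc j with hA
  -- key equality: ‖tupleOpP p A‖ = (∑ j, ‖A j‖ ^ q) ^ (1/q)
  have hsum_nonneg : (0:ℝ) ≤ ∑ j, ‖A j‖ ^ q :=
    Finset.sum_nonneg fun j _ => Real.rpow_nonneg (norm_nonneg _) _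
  have hkey : ‖tupleOpP p A‖ = (∑ j, ‖A j‖ ^ q) ^ (1/q) := by
    refine le_antisymm (norm_tupleOpP_le p hp A) ?_
    calc (∑ j, ‖A j‖ ^ q) ^ (1/q) = ‖tupleOpP p A x‖ := by
          rw [norm_tupleOpP_apply p hp]
          congr 1
          exact Finset.sum_congr rfl fun j _ => by rw [hxM j]
      _ ≤ ‖tupleOpP p A‖ := (tupleOpP p A).unit_le_opNorm x hx1.le
  have hkeyq : ‖tupleOpP p A‖ ^ q = ∑ j, ‖A j‖ ^ q := by
    rw [hkey, one_div, Real.rpow_inv_rpow hsum_nonneg hq.ne']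
  -- componentwise optimality
  have hcomp : ∀ (j : Fin d) (lam : 𝕜), ‖A j‖ ≤ ‖Tc j - lam • Sc j‖ := by
    intro j lam
    set z : Fin d → 𝕜 := Function.update z0 j lam with hz
    have h1 : ‖tupleOpP p A‖ ≤ ‖tupleOpP p (fun i => Tc i - z i • Sc i)‖ := by
      rw [← hdist, ← tupleOpP_sub, ← dist_eq_norm]
      exact Metric.infDist_le_dist_of_mem (Set.mem_range_self z)
    have h2 : ‖tupleOpP p A‖ ^ q ≤ ∑ i, ‖Tc i - z i • Sc i‖ ^ q := by
      calc ‖tupleOpP p A‖ ^ q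
          ≤ ((∑ i, ‖Tc i - z i • Sc i‖ ^ q) ^ (1/q)) ^ q :=
            Real.rpow_le_rpow (norm_nonneg _) (h1.trans (norm_tupleOpP_le p hp _)) hq.le
        _ = ∑ i, ‖Tc i - z i • Sc i‖ ^ q := by
            rw [one_div, Real.rpow_inv_rpow (Finset.sum_nonneg fun i _ =>
              Real.rpow_nonneg (norm_nonneg _) _) hq.ne']
    rw [hkeyq] at h2
    rw [← Finset.sum_erase_add _ _ (Finset.mem_univ j),
        ← Finset.sum_erase_add _ (fun i => ‖Tc i - z i • Sc i‖ ^ q) (Finset.mem_univ j)] at h2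
    have herase : ∑ i ∈ Finset.univ.erase j, ‖A i‖ ^ q
        = ∑ i ∈ Finset.univ.erase j, ‖Tc i - z i • Sc i‖ ^ q := by
      refine Finset.sum_congr rfl fun i hi => ?_
      rw [hz, Function.update_of_ne (Finset.ne_of_mem_erase hi)]
    rw [herase, add_le_add_iff_left, hz, Function.update_self] at h2
    exact (Real.rpow_le_rpow_iff (norm_nonneg _) (norm_nonneg _) hq).mp h2
  have hcompEq : ∀ j, Metric.infDist (Tc j) (Set.range fun lam : 𝕜 => lam • Sc j) = ‖A j‖ := by
    intro j
    refine le_antisymm ?_ ?_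
    · calc Metric.infDist (Tc j) _ ≤ dist (Tc j) (z0 j • Sc j) :=
            Metric.infDist_le_dist_of_mem (Set.mem_range_self (z0 j))
        _ = ‖A j‖ := dist_eq_norm _ _
    · rw [← not_lt]
      intro hlt
      obtain ⟨y, ⟨lam, rfl⟩, hd⟩ :=
        (Metric.infDist_lt_iff ⟨_, Set.mem_range_self (z0 j)⟩).mp hlt
      rw [dist_eq_norm] at hd
      exact absurd hd (not_lt.mpr (hcomp j lam))
  refine ⟨hcompEq, ?_⟩
  rw [hdist, hkeyq]
  exact Finset.sum_congr rfl fun j _ => by rw [hcompEq j]
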